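/- arXiv:1802.01973 — 4 statements merged into one kernel-verified Lean document; each statement's English description precedes it below -/
import Mathlib

section
/- Let W ∈ L(H) be a positive operator, S ⊆ H a closed subspace, and T the shorted operator of W to S. Then the following conditions are equivalent: (i) T ⁻≤ W (minus order); (ii) the pair (W, ker T) is compatible; (iii) H = ker T + ker(W − T); (iv) range T ⊆ range W. -/
open ContinuousLinearMap
open scoped ComplexInnerProductSpace

noncomputable section

variable {H : Type*} [NormedAddCommGroup H] [InnerProductSpace ℂ H] [CompleteSpace H]

/-- `M(W,S)`: the set of operators `X` with `0 ≤ X ≤ W` (Loewner order) and `range X ⊆ S^⊥`. -/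
def MSet (W : H →L[ℂ] H) (S : Submodule ℂ H) : Set (H →L[ℂ] H) :=
  {X | X.IsPositive ∧ (W - X).IsPositive ∧ LinearMap.range (X : H →ₗ[ℂ] H) ≤ Sᗮ}

/-- `T` is the shorted operator of `W` to `S`, i.e. the maximum of `M(W,S)` in the Loewner
order. -/
def IsShorted (W : H →L[ℂ] H) (S : Submodule ℂ H) (T : H →L[ℂ] H) : Prop :=
  T ∈ MSet W S ∧ ∀ X ∈ MSet W S, (T - X).IsPositive

/-- The minus order: `A ⁻≤ B` iff there are bounded idempotents `P, Q` with `A = PB` and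
`A* = QB*`. -/
def MinusLE (A B : H →L[ℂ] H) : Prop :=
  ∃ P Q : H →L[ℂ] H, IsIdempotentElem P ∧ IsIdempotentElem Q ∧
    A = P ∘L B ∧ adjoint A = Q ∘L adjoint B

/-- The pair `(W, N)` is compatible: there is a bounded idempotent `Q` with range `N` such that
`WQ` is selfadjoint. -/
def Compatible (W : H →L[ℂ] H) (N : Submodule ℂ H) : Prop :=
  ∃ Q : H →L[ℂ] H, IsIdempotentElem Q ∧ LinearMap.range (Q : H →ₗ[ℂ] H) = N ∧ IsSelfAdjoint (W ∘L Q)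

/-- `M⁻(W,S)`: operators `X` with `X ⁻≤ W`, `range X ⊆ S^⊥` and `range X* ⊆ S^⊥`. -/
def MMinusSet (W : H →L[ℂ] H) (S : Submodule ℂ H) : Set (H →L[ℂ] H) :=
  {X | MinusLE X W ∧ LinearMap.range (X : H →ₗ[ℂ] H) ≤ Sᗮ ∧ LinearMap.range ((adjoint X : H →L[ℂ] H) : H →ₗ[ℂ] H) ≤ Sᗮ}

/-- `X₀` is a `W`-inverse of `M` in `R(C)`: for every `x`, `X₀ x` is a `W`-weighted least squares
solution of `M z = C x`. -/
def WInverseIn (W M C X₀ : H →L[ℂ] H) : Prop :=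
  ∀ x z : H, (⟪W (M (X₀ x) - C x), M (X₀ x) - C x⟫).re ≤ (⟪W (M z - C x), M z - C x⟫).re

/-- The left weighted star order `A ₋*_W≤ B`. -/
def LStarW (W A B : H →L[ℂ] H) : Prop :=
  LinearMap.range (B : H →ₗ[ℂ] H) = LinearMap.range (A : H →ₗ[ℂ] H) ⊔ LinearMap.range ((B - A : H →L[ℂ] H) : H →ₗ[ℂ] H) ∧
  LinearMap.range (A : H →ₗ[ℂ] H) ⊓ LinearMap.range ((B - A : H →L[ℂ] H) : H →ₗ[ℂ] H) = ⊥ ∧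
  LinearMap.range ((B - A : H →L[ℂ] H) : H →ₗ[ℂ] H) ≤ LinearMap.ker ((adjoint A ∘L W : H →L[ℂ] H) : H →ₗ[ℂ] H)

/-- The right weighted star order `A ≤*_W B`. -/
def RStarW (W A B : H →L[ℂ] H) : Prop :=
  LinearMap.range ((adjoint B : H →L[ℂ] H) : H →ₗ[ℂ] H) =
    LinearMap.range ((adjoint A : H →L[ℂ] H) : H →ₗ[ℂ] H) ⊔ LinearMap.range ((adjoint B - adjoint A : H →L[ℂ] H) : H →ₗ[ℂ] H) ∧
  LinearMap.range ((adjoint A : H →L[ℂ] H) : H →ₗ[ℂ] H) ⊓ LinearMap.range ((adjoint B - adjoint A : H →L[ℂ] H) : H →ₗ[ℂ] H) = ⊥ ∧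
  LinearMap.range ((adjoint B - adjoint A : H →L[ℂ] H) : H →ₗ[ℂ] H) ≤ LinearMap.ker ((A ∘L W : H →L[ℂ] H) : H →ₗ[ℂ] H)

/-- The weighted star order `A *_W≤ B`. -/
def StarW (W A B : H →L[ℂ] H) : Prop :=
  LStarW W A B ∧ RStarW W A B

lemma stmt3aux_eq_of_pos_pos {A B : H →L[ℂ] H} (h1 : (A - B).IsPositive) (h2 : (B - A).IsPositive) :
    A = B :=
  le_antisymm ((le_def A B).2 h2) ((le_def B A).2 h1)

lemma stmt3aux_inner_idem {P : H →L[ℂ] H} (hP : IsIdempotentElem P) (hsa : IsSelfAdjoint P) (x : H) :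
    ⟪P x, x⟫ = (‖P x‖ : ℂ) ^ 2 := by
  have h1 : P (P x) = P x := by exact congrArg (fun f : H →L[ℂ] H => f x) hP
  calc ⟪P x, x⟫ = ⟪(adjoint P) (P x), x⟫ := by rw [hsa.adjoint_eq, h1]
    _ = ⟪P x, P x⟫ := adjoint_inner_left P x (P x)
    _ = (‖P x‖ : ℂ) ^ 2 := inner_self_eq_norm_sq_to_K _

lemma stmt3aux_isPositive_of_idem {P : H →L[ℂ] H} (hP : IsIdempotentElem P) (hsa : IsSelfAdjoint P) :
    P.IsPositive := by
  refine isPositive_def'.2 ⟨hsa, fun x => ?_⟩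
  simp only [reApplyInnerSelf, stmt3aux_inner_idem hP hsa, ← Complex.ofReal_pow,
    RCLike.re_to_complex, Complex.ofReal_re]
  positivity

lemma stmt3aux_exists_sqrt {W : H →L[ℂ] H} (hW : W.IsPositive) :
    ∃ A : H →L[ℂ] H, A.IsPositive ∧ A ∘L A = W := by
  have hW0 : (0 : H →L[ℂ] H) ≤ W := (nonneg_iff_isPositive W).2 hW
  exact ⟨CFC.sqrt W, (nonneg_iff_isPositive _).1 (CFC.sqrt_nonneg W),
    CFC.sqrt_mul_sqrt_self W hW0⟩

lemma stmt3aux_pos_apply_eq_zero {T : H →L[ℂ] H} (hT : T.IsPositive) {s : H} (h : ⟪T s, s⟫ = 0) :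
    T s = 0 := by
  obtain ⟨B, hBpos, hBB⟩ := stmt3aux_exists_sqrt hT
  have hTs : T s = B (B s) := by rw [← hBB]; rfl
  have h2 : ⟪B s, B s⟫ = 0 := by
    calc ⟪B s, B s⟫ = ⟪(adjoint B) (B s), s⟫ := (adjoint_inner_left B s (B s)).symm
      _ = ⟪B (B s), s⟫ := by rw [hBpos.isSelfAdjoint.adjoint_eq]
      _ = 0 := by rw [← hTs, h]
  rw [hTs, inner_self_eq_zero.mp h2, map_zero]

lemma stmt3aux_S_le_ker {T : H →L[ℂ] H} {S : Submodule ℂ H} (hTpos : T.IsPositive)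
    (hTran : LinearMap.range (T : H →ₗ[ℂ] H) ≤ Sᗮ) : S ≤ LinearMap.ker (T : H →ₗ[ℂ] H) := by
  intro s hs
  have h1 : ⟪s, T s⟫ = 0 :=
    Submodule.inner_right_of_mem_orthogonal hs (hTran ⟨s, rfl⟩)
  exact LinearMap.mem_ker.2 <| stmt3aux_pos_apply_eq_zero hTpos (inner_eq_zero_symm.mp h1)

lemma stmt3aux_imp21 (W T : H →L[ℂ] H) (S : Submodule ℂ H)
    (hW : W.IsPositive) (hT : IsShorted W S T)
    (h2 : Compatible W (LinearMap.ker (T : H →ₗ[ℂ] H))) : MinusLE T W := by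
  obtain ⟨⟨hTpos, hWTpos, hTran⟩, hTmax⟩ := hT
  obtain ⟨Q, hQidem, hQran, hWQsa⟩ := h2
  have hTsa : IsSelfAdjoint T := hTpos.isSelfAdjoint
  have hWsa : IsSelfAdjoint W := hW.isSelfAdjoint
  have hQW : star Q * W = W * Q := by
    have h := hWQsa.star_eq
    rwa [← mul_def, star_mul, hWsa.star_eq] at h
  have hTQ : T * Q = 0 := by
    ext x
    have : Q x ∈ LinearMap.ker (T : H →ₗ[ℂ] H) := hQran ▸ LinearMap.mem_range_self (Q : H →ₗ[ℂ] H) x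
    simpa [mul_apply] using this
  have hQT : star Q * T = 0 := by
    calc star Q * T = star (star T * Q) := by rw [star_mul, star_star]
      _ = star (T * Q) := by rw [hTsa.star_eq]
      _ = 0 := by rw [hTQ, star_zero]
  set R : H →L[ℂ] H := 1 - Q with hR
  have hRidem : IsIdempotentElem R := hQidem.one_sub
  have hQWR : star Q * (W * R) = 0 := by
    rw [hR, mul_sub, mul_one, mul_sub, hQW, ← mul_assoc, hQW, mul_assoc, hQidem.eq, sub_self]
  set X : H →L[ℂ] H := W * R with hX
  have h2' : star R * (W * R) = W * R := by
    rw [hR, star_sub, star_one, sub_mul, one_mul, ← hR, hQWR, sub_zero]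
  have hXpos : X.IsPositive := by
    have h := hW.adjoint_conj R
    have h4 : star R * (W * R) = X := by rw [h2', hX]
    rwa [← star_eq_adjoint, ← mul_def, ← mul_def, h4] at h
  have hWXQ : W - X = W * Q := by rw [hX, hR, mul_sub, mul_one, sub_sub_cancel]
  have hWXpos : (W - X).IsPositive := by
    have h := hW.adjoint_conj Q
    have h5 : star Q * (W * Q) = W - X := by
      rw [← mul_assoc, hQW, mul_assoc, hQidem.eq, hWXQ]
    rwa [← star_eq_adjoint, ← mul_def, ← mul_def, h5] at h
  have hXran : LinearMap.range (X : H →ₗ[ℂ] H) ≤ Sᗮ := by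
    rintro _ ⟨x, rfl⟩
    rw [Submodule.mem_orthogonal]
    intro s hs
    obtain ⟨u, hu⟩ := (hQran ▸ stmt3aux_S_le_ker hTpos hTran) hs
    calc ⟪s, X x⟫ = ⟪Q u, X x⟫ := congrArg (fun v => ⟪v, X x⟫) hu.symm
      _ = ⟪u, adjoint Q (X x)⟫ := (adjoint_inner_right Q u (X x)).symm
      _ = ⟪u, (star Q * X) x⟫ := by rw [star_eq_adjoint]; rfl
      _ = 0 := by rw [hX, hQWR]; simp
  have hTX : (T - X).IsPositive := hTmax X ⟨hXpos, hWXpos, hXran⟩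
  have h1' : star R * T = T := by
    rw [hR, star_sub, star_one, sub_mul, one_mul, hQT, sub_zero]
  have hRTR : star R * (T * R) = T := by
    rw [← mul_assoc, h1', hR, mul_sub, mul_one, hTQ, sub_zero]
  have hXT : (X - T).IsPositive := by
    have h := hWTpos.adjoint_conj R
    have h3 : star R * ((W - T) * R) = X - T := by
      rw [sub_mul, mul_sub, h2', hRTR, hX]
    rwa [← star_eq_adjoint, ← mul_def, ← mul_def, h3] at h
  have hTeq : T = X := stmt3aux_eq_of_pos_pos hTX hXT
  have hstarRidem : IsIdempotentElem (star R) := by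
    show star R * star R = star R
    rw [← star_mul, hRidem.eq]
  have hTW : T = star R * W := by
    have h := congrArg star hTeq
    rwa [hTsa.star_eq, hX, star_mul, hWsa.star_eq] at h
  refine ⟨star R, star R, hstarRidem, hstarRidem, by rw [← mul_def]; exact hTW, ?_⟩
  rw [← star_eq_adjoint T, ← star_eq_adjoint W, hTsa.star_eq, hWsa.star_eq, ← mul_def]
  exact hTW

lemma stmt3aux_imp14 (W T : H →L[ℂ] H) (hTsa : IsSelfAdjoint T) (hWsa : IsSelfAdjoint W)
    (h1 : MinusLE T W) : LinearMap.range (T : H →ₗ[ℂ] H) ≤ LinearMap.range (W : H →ₗ[ℂ] H) := by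
  obtain ⟨P, Q, hP, hQ, e1, e2⟩ := h1
  have hTW : T = W ∘L adjoint Q := by
    have h := congrArg adjoint e2
    rwa [adjoint_adjoint, adjoint_comp, adjoint_adjoint] at h
  rintro _ ⟨x, rfl⟩
  exact ⟨adjoint Q x, by rw [hTW]; rfl⟩

lemma stmt3aux_imp32 (W T : H →L[ℂ] H) (hW : W.IsPositive) (hTpos : T.IsPositive)
    (h3 : LinearMap.ker (T : H →ₗ[ℂ] H) ⊔ LinearMap.ker ((W - T : H →L[ℂ] H) : H →ₗ[ℂ] H) = ⊤) :
    Compatible W (LinearMap.ker (T : H →ₗ[ℂ] H)) := by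
  have hWsym : (W : H →ₗ[ℂ] H).IsSymmetric := isSelfAdjoint_iff_isSymmetric.mp hW.isSelfAdjoint
  have hTsym : (T : H →ₗ[ℂ] H).IsSymmetric := isSelfAdjoint_iff_isSymmetric.mp hTpos.isSelfAdjoint
  set N := LinearMap.ker (T : H →ₗ[ℂ] H) with hN
  set J := LinearMap.ker (T : H →ₗ[ℂ] H) ⊓ LinearMap.ker ((W - T : H →L[ℂ] H) : H →ₗ[ℂ] H) with hJ
  have hJclosed : IsClosed (J : Set H) := by
    rw [hJ, Submodule.coe_inf]
    exact (ContinuousLinearMap.isClosed_ker T).inter (ContinuousLinearMap.isClosed_ker (W - T))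
  haveI : CompleteSpace J := hJclosed.completeSpace_coe
  set K := LinearMap.ker ((W - T : H →L[ℂ] H) : H →ₗ[ℂ] H) ⊓ Jᗮ with hK
  have hNclosed : IsClosed (N : Set H) := ContinuousLinearMap.isClosed_ker T
  have hKclosed : IsClosed (K : Set H) := by
    rw [hK, Submodule.coe_inf]
    exact (ContinuousLinearMap.isClosed_ker (W - T)).inter J.isClosed_orthogonal
  have hcompl : IsCompl N K := by
    rw [isCompl_iff]
    constructor
    · rw [Submodule.disjoint_def]
      intro x hxN hxK
      have hxJ : x ∈ J := ⟨hxN, hxK.1⟩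
      exact inner_self_eq_zero.mp (Submodule.inner_right_of_mem_orthogonal hxJ hxK.2)
    · rw [codisjoint_iff, eq_top_iff]
      intro x _
      have hx : x ∈ LinearMap.ker (T : H →ₗ[ℂ] H) ⊔ LinearMap.ker ((W - T : H →L[ℂ] H) : H →ₗ[ℂ] H) := h3 ▸ Submodule.mem_top
      obtain ⟨n, hn, m, hm, hx⟩ := Submodule.mem_sup.mp hx
      have hm1J : (Submodule.orthogonalProjection J m : H) ∈ J := SetLike.coe_mem _
      have hm2 : m - Submodule.orthogonalProjection J m ∈ Jᗮ := Submodule.sub_starProjection_mem_orthogonal (K := J) m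
      refine Submodule.mem_sup.mpr ⟨n + Submodule.orthogonalProjection J m, add_mem hn hm1J.1,
        m - Submodule.orthogonalProjection J m, ⟨sub_mem hm hm1J.2, hm2⟩, by rw [← hx]; abel⟩
  set Q : H →L[ℂ] H := N.subtypeL ∘L (N.linearProjOfClosedCompl K hcompl hNclosed hKclosed)
    with hQdef
  have hQmem : ∀ x, Q x ∈ N := fun x => SetLike.coe_mem _
  have hQleft : ∀ n ∈ N, Q n = n := by
    intro n hn
    show ((N.projectionOnto K hcompl) n : H) = n
    rw [show n = ((⟨n, hn⟩ : N) : H) from rfl, Submodule.linearProjOfIsCompl_apply_left hcompl]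
  have hQright : ∀ k ∈ K, Q k = 0 := by
    intro k hk
    show ((N.projectionOnto K hcompl) k : H) = 0
    rw [Submodule.projectionOnto_apply_of_mem_right hcompl hk]
    rfl
  have hQsub : ∀ x, x - Q x ∈ K := by
    intro x
    have hx : x ∈ N ⊔ K := by rw [hcompl.sup_eq_top]; trivial
    obtain ⟨n, hn, k, hk, hx⟩ := Submodule.mem_sup.mp hx
    have : Q x = n := by
      rw [← hx, map_add, hQleft n hn, hQright k hk, add_zero]
    rw [this, ← hx, add_sub_cancel_left]
    exact hk
  have key : ∀ n ∈ N, ∀ k ∈ K, ⟪W n, k⟫ = 0 := by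
    intro n hn k hk
    have hWk : W k = T k := by
      have h := hk.1
      have h2 : (W - T) k = 0 := h
      rw [ContinuousLinearMap.sub_apply, sub_eq_zero] at h2
      exact h2
    calc ⟪W n, k⟫ = ⟪n, W k⟫ := hWsym n k
      _ = ⟪n, T k⟫ := by rw [hWk]
      _ = ⟪T n, k⟫ := (hTsym n k).symm
      _ = 0 := by
          have h0 : T n = 0 := hn
          rw [h0, inner_zero_left]
  refine ⟨Q, ?_, ?_, ?_⟩
  · ext x
    exact hQleft (Q x) (hQmem x)
  · refine le_antisymm ?_ ?_
    · rintro _ ⟨x, rfl⟩; exact hQmem x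
    · intro n hn; exact ⟨n, hQleft n hn⟩
  · rw [isSelfAdjoint_iff_isSymmetric]
    intro x y
    have hy : Q y + (y - Q y) = y := by abel
    have hx : Q x + (x - Q x) = x := by abel
    calc ⟪(W ∘L Q) x, y⟫ = ⟪W (Q x), Q y + (y - Q y)⟫ := by rw [hy]; rfl
      _ = ⟪W (Q x), Q y⟫ + ⟪W (Q x), y - Q y⟫ := inner_add_right _ _ _
      _ = ⟪W (Q x), Q y⟫ := by rw [key (Q x) (hQmem x) (y - Q y) (hQsub y), add_zero]
      _ = ⟪Q x, W (Q y)⟫ := hWsym (Q x) (Q y)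
      _ = ⟪Q x, W (Q y)⟫ + ⟪x - Q x, W (Q y)⟫ := by
          rw [inner_eq_zero_symm.mp (key (Q y) (hQmem y) (x - Q x) (hQsub x)), add_zero]
      _ = ⟪Q x + (x - Q x), W (Q y)⟫ := (inner_add_left _ _ _).symm
      _ = ⟪x, (W ∘L Q) y⟫ := by rw [hx]; rfl

lemma stmt3aux_imp43 (W T : H →L[ℂ] H) (S : Submodule ℂ H)
    (hW : W.IsPositive) (hT : IsShorted W S T)
    (h4 : LinearMap.range (T : H →ₗ[ℂ] H) ≤ LinearMap.range (W : H →ₗ[ℂ] H)) :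
    LinearMap.ker (T : H →ₗ[ℂ] H) ⊔ LinearMap.ker ((W - T : H →L[ℂ] H) : H →ₗ[ℂ] H) = ⊤ := by
  obtain ⟨⟨hTpos, hWTpos, hTran⟩, hTmax⟩ := hT
  have hWsym : (W : H →ₗ[ℂ] H).IsSymmetric := isSelfAdjoint_iff_isSymmetric.mp hW.isSelfAdjoint
  have hTsym : (T : H →ₗ[ℂ] H).IsSymmetric := isSelfAdjoint_iff_isSymmetric.mp hTpos.isSelfAdjoint
  obtain ⟨A, hApos, hAA⟩ := stmt3aux_exists_sqrt hW
  have hAsym : (A : H →ₗ[ℂ] H).IsSymmetric := isSelfAdjoint_iff_isSymmetric.mp hApos.isSelfAdjoint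
  have hWapp : ∀ u, W u = A (A u) := fun u => by rw [← hAA]; rfl
  set M := (Submodule.map (A : H →ₗ[ℂ] H) S).topologicalClosure with hM
  have hMclosed : IsClosed (M : Set H) := Submodule.isClosed_topologicalClosure _
  haveI : CompleteSpace M := hMclosed.completeSpace_coe
  set E : H →L[ℂ] H := M.subtypeL ∘L Submodule.orthogonalProjection M with hE
  have hEsa : IsSelfAdjoint E := isSelfAdjoint_starProjection M
  have hEmem : ∀ x, E x ∈ M := fun x => SetLike.coe_mem _
  have hEeq : ∀ m ∈ M, E m = m := fun m hm => Submodule.starProjection_eq_self_iff.2 hm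
  have hEidem : IsIdempotentElem E := by
    ext x
    exact hEeq _ (hEmem x)
  have hE1idem : IsIdempotentElem (1 - E) := hEidem.one_sub
  have hE1sa : IsSelfAdjoint (1 - E) := (IsSelfAdjoint.one (H →L[ℂ] H)).sub hEsa
  have hEperp : ∀ x : H, x - E x ∈ Mᗮ := fun x => Submodule.sub_starProjection_mem_orthogonal (K := M) x
  have hWquad : ∀ u, ⟪W u, u⟫ = (‖A u‖ : ℂ) ^ 2 := by
    intro u
    rw [hWapp u]
    calc ⟪A (A u), u⟫ = ⟪A u, A u⟫ := hAsym (A u) u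
      _ = (‖A u‖ : ℂ) ^ 2 := inner_self_eq_norm_sq_to_K _
  set T' : H →L[ℂ] H := A ∘L ((1 - E) ∘L A) with hT'
  have hT'app : ∀ x, T' x = A (A x - E (A x)) := by
    intro x
    simp [hT', comp_apply, ContinuousLinearMap.sub_apply, one_apply]
  -- T' is in MSet W S
  have hT'pos : T'.IsPositive := by
    have h := (stmt3aux_isPositive_of_idem hE1idem hE1sa).adjoint_conj A
    rwa [hApos.isSelfAdjoint.adjoint_eq] at h
  have hWT' : W - T' = A ∘L (E ∘L A) := by
    ext x
    simp only [ContinuousLinearMap.sub_apply, hT'app, comp_apply, hWapp x, map_sub]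
    abel
  have hWT'pos : (W - T').IsPositive := by
    rw [hWT']
    have h := (stmt3aux_isPositive_of_idem hEidem hEsa).adjoint_conj A
    rwa [hApos.isSelfAdjoint.adjoint_eq] at h
  have hmapM : ∀ s ∈ S, A s ∈ M :=
    fun s hs => Submodule.le_topologicalClosure _ (Submodule.mem_map_of_mem hs)
  have hT'ran : LinearMap.range (T' : H →ₗ[ℂ] H) ≤ Sᗮ := by
    rintro _ ⟨x, rfl⟩
    rw [Submodule.mem_orthogonal]
    intro s hs
    change ⟪s, T' x⟫ = 0
    rw [hT'app]
    calc ⟪s, A (A x - E (A x))⟫ = ⟪A s, A x - E (A x)⟫ := (hAsym s _).symm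
      _ = 0 := Submodule.inner_right_of_mem_orthogonal (hmapM s hs) (hEperp (A x))
  have hTX : (T - T').IsPositive := hTmax T' ⟨hT'pos, hWT'pos, hT'ran⟩
  -- the reverse inequality via minimality of the distance to M
  have hXT : (T' - T).IsPositive := by
    refine isPositive_def'.2 ⟨hT'pos.isSelfAdjoint.sub hTpos.isSelfAdjoint, fun x => ?_⟩
    have key : ∀ m ∈ M, (⟪T x, x⟫).re ≤ ‖A x - m‖ ^ 2 := by
      intro m hm
      have hclosed : IsClosed {y : H | (⟪T x, x⟫).re ≤ ‖A x - y‖ ^ 2} := by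
        apply isClosed_le continuous_const
        fun_prop
      have hsub : ((Submodule.map (A : H →ₗ[ℂ] H) S : Submodule ℂ H) : Set H) ⊆
          {y : H | (⟪T x, x⟫).re ≤ ‖A x - y‖ ^ 2} := by
        rintro _ ⟨s, hs, rfl⟩
        have hTxs : ⟪s, T x⟫ = 0 :=
          Submodule.inner_right_of_mem_orthogonal hs (hTran ⟨x, rfl⟩)
        have hTxs' : ⟪T x, s⟫ = 0 := inner_eq_zero_symm.mp hTxs
        have hTss : ⟪s, T s⟫ = 0 :=
          Submodule.inner_right_of_mem_orthogonal hs (hTran ⟨s, rfl⟩)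
        have hTsx : ⟪T s, x⟫ = 0 := (hTsym s x).trans hTxs
        have hTss' : ⟪T s, s⟫ = 0 := (hTsym s s).trans hTss
        have h1 : ⟪T (x - s), x - s⟫ = ⟪T x, x⟫ := by
          rw [map_sub, inner_sub_left, inner_sub_right, inner_sub_right, hTxs', hTsx, hTss']
          ring
        have h2 : (⟪T (x - s), x - s⟫).re ≤ (⟪W (x - s), x - s⟫).re := by
          have h := hWTpos.re_inner_nonneg_left (x - s)
          simp only [reApplyInnerSelf, ContinuousLinearMap.sub_apply, inner_sub_left,
            RCLike.re_to_complex, Complex.sub_re] at h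
          linarith
        have h3 : (⟪W (x - s), x - s⟫).re = ‖A x - A s‖ ^ 2 := by
          rw [hWquad (x - s), ← Complex.ofReal_pow, Complex.ofReal_re, map_sub]
        show (⟪T x, x⟫).re ≤ ‖A x - A s‖ ^ 2
        rw [← h1, ← h3]
        exact h2
      have hmem : m ∈ closure ((Submodule.map (A : H →ₗ[ℂ] H) S : Submodule ℂ H) : Set H) := by
        rw [← Submodule.topologicalClosure_coe]
        exact hm
      exact closure_minimal hsub hclosed hmem
    have hkey := key (E (A x)) (hEmem (A x))
    have hT'x : ⟪T' x, x⟫ = (‖A x - E (A x)‖ : ℂ) ^ 2 := by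
      have e1 : (1 - E) (A x) = A x - E (A x) := by
        simp [ContinuousLinearMap.sub_apply, one_apply]
      calc ⟪T' x, x⟫ = ⟪A ((1 - E) (A x)), x⟫ := by rw [hT'app, e1]
        _ = ⟪(1 - E) (A x), A x⟫ := hAsym _ x
        _ = (‖(1 - E) (A x)‖ : ℂ) ^ 2 := stmt3aux_inner_idem hE1idem hE1sa (A x)
        _ = (‖A x - E (A x)‖ : ℂ) ^ 2 := by rw [e1]
    simp only [reApplyInnerSelf, ContinuousLinearMap.sub_apply, inner_sub_left,
      RCLike.re_to_complex, Complex.sub_re]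
    have : (⟪T' x, x⟫).re = ‖A x - E (A x)‖ ^ 2 := by
      rw [hT'x, ← Complex.ofReal_pow, Complex.ofReal_re]
    linarith
  have hTeq : T = T' := stmt3aux_eq_of_pos_pos hTX hXT
  -- now prove the decomposition
  rw [eq_top_iff]
  intro x _
  obtain ⟨y, hy : W y = T x⟩ := h4 (LinearMap.mem_range_self (T : H →ₗ[ℂ] H) x)
  set z : H := A y - (A x - E (A x)) with hz
  have hAz : A z = 0 := by
    have h1 : A (A x - E (A x)) = T' x := (hT'app x).symm
    rw [hz, map_sub, ← hWapp y, h1, hy, ← hTeq]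
    exact sub_self _
  set Y := (LinearMap.range (A : H →ₗ[ℂ] H)).topologicalClosure with hY
  have hzY : z ∈ Y := by
    refine sub_mem (Submodule.le_topologicalClosure _ (LinearMap.mem_range_self (A : H →ₗ[ℂ] H) y)) ?_
    refine sub_mem (Submodule.le_topologicalClosure _ (LinearMap.mem_range_self (A : H →ₗ[ℂ] H) x)) ?_
    have hMY : M ≤ Y := by
      rw [hM, hY]
      apply Submodule.topologicalClosure_mono
      rintro _ ⟨s, _, rfl⟩
      exact LinearMap.mem_range_self (A : H →ₗ[ℂ] H) s
    exact hMY (hEmem (A x))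
  have hz0 : z = 0 := by
    have hclosed : IsClosed {u : H | ⟪z, u⟫ = 0} := by
      apply isClosed_eq ?_ continuous_const
      exact Continuous.inner continuous_const continuous_id
    have hsubs : ((LinearMap.range (A : H →ₗ[ℂ] H) : Submodule ℂ H) : Set H) ⊆ {u : H | ⟪z, u⟫ = 0} := by
      rintro _ ⟨w, rfl⟩
      show ⟪z, A w⟫ = 0
      exact (hAsym z w).symm.trans (show (⟪A z, w⟫ : ℂ) = 0 by rw [hAz, inner_zero_left])
    have hmem : (z : H) ∈ closure ((LinearMap.range (A : H →ₗ[ℂ] H) : Submodule ℂ H) : Set H) := by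
      rw [← Submodule.topologicalClosure_coe]
      exact hzY
    exact inner_self_eq_zero.mp (closure_minimal hsubs hclosed hmem)
  have hAyEq : A y = A x - E (A x) := by
    have := sub_eq_zero.mp (hz ▸ hz0)
    exact this
  have hTy : T y = T x := by
    have hAyM : A y ∈ Mᗮ := hAyEq ▸ hEperp (A x)
    have h5 : E (A y) = 0 := by
      show (Submodule.orthogonalProjection M (A y) : H) = 0
      rw [Submodule.orthogonalProjectionOnto_apply_of_mem_orthogonal hAyM]
      rfl
    calc T y = T' y := by rw [hTeq]
      _ = A (A y - E (A y)) := hT'app y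
      _ = A (A y) := by rw [h5, sub_zero]
      _ = W y := (hWapp y).symm
      _ = T x := hy
  refine Submodule.mem_sup.mpr ⟨x - y, ?_, y, ?_, by abel⟩
  · show T (x - y) = 0
    rw [map_sub, hTy, sub_self]
  · show (W - T) y = 0
    rw [ContinuousLinearMap.sub_apply, hTy, hy, sub_self]

/-- equivalence of (i) `T ⁻≤ W`; (ii) `(W, ker T)` compatible;
(iii) `H = ker T + ker (W - T)`; (iv) `range T ⊆ range W`. -/
theorem stmt3 (W T : H →L[ℂ] H) (S : Submodule ℂ H) (hS : IsClosed (S : Set H))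
    (hW : W.IsPositive) (hT : IsShorted W S T) :
    [MinusLE T W,
     Compatible W (LinearMap.ker (T : H →ₗ[ℂ] H)),
     LinearMap.ker (T : H →ₗ[ℂ] H) ⊔ LinearMap.ker ((W - T : H →L[ℂ] H) : H →ₗ[ℂ] H) = ⊤,
     LinearMap.range (T : H →ₗ[ℂ] H) ≤ LinearMap.range (W : H →ₗ[ℂ] H)].TFAE := by
  tfae_have 2 → 1 := stmt3aux_imp21 W T S hW hT
  tfae_have 1 → 4 := stmt3aux_imp14 W T hT.1.1.isSelfAdjoint hW.isSelfAdjoint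
  tfae_have 4 → 3 := stmt3aux_imp43 W T S hW hT
  tfae_have 3 → 2 := stmt3aux_imp32 W T hW hT.1.1
  tfae_finish
end
end

section
/- Let W ∈ L(H) be a positive operator, S ⊆ H a closed subspace, and T the shorted operator of W to S. Then M⁻(W, ker T) = M⁻(W, S), i.e. an operator X ∈ L(H) satisfies X ⁻≤ W, range X ⊆ (ker T)^⊥ and range X* ⊆ (ker T)^⊥ if and only if X ⁻≤ W, range X ⊆ S^⊥ and range X* ⊆ S^⊥. -/
set_option synthInstance.maxHeartbeats 1000000
set_option maxHeartbeats 2000000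


open ContinuousLinearMap
open scoped ComplexInnerProductSpace

noncomputable section

variable {H : Type*} [NormedAddCommGroup H] [InnerProductSpace ℂ H] [CompleteSpace H]

lemma aux_apply_eq_zero (A : H →L[ℂ] H) (hA : A.IsPositive) (x : H)
    (h : RCLike.re (⟪A x, x⟫) = 0) : A x = 0 := by
  have hA0 : (0 : H →L[ℂ] H) ≤ A := (nonneg_iff_isPositive A).mpr hA
  set r := CFC.sqrt A with hrdef
  have hrr : r * r = A := CFC.sqrt_mul_sqrt_self A hA0
  have hrpos : r.IsPositive := (nonneg_iff_isPositive r).mp (CFC.sqrt_nonneg _)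
  have hsa : adjoint r = r := hrpos.isSelfAdjoint.adjoint_eq
  have key : (⟪A x, x⟫) = ⟪r x, r x⟫ := by
    have h1 : A x = (adjoint r) (r x) := by rw [hsa, ← mul_apply_eq_comp, hrr]
    rw [h1, adjoint_inner_left]
  have hn : ‖r x‖ ^ 2 = 0 := by
    rw [norm_sq_eq_re_inner (𝕜 := ℂ), ← key]; exact h
  have h0 : r x = 0 := by
    rw [← norm_eq_zero]; exact pow_eq_zero_iff (n := 2) (by norm_num) |>.mp hn
  calc A x = (r * r) x := by rw [hrr]
    _ = r (r x) := rfl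
    _ = 0 := by rw [h0, map_zero]

lemma aux_proj_inner (U : Submodule ℂ H) [CompleteSpace U] (x : H) :
    (⟪(U.subtypeL ∘L U.orthogonalProjectionOnto) x, x⟫) =
      ⟪(U.subtypeL ∘L U.orthogonalProjectionOnto) x, (U.subtypeL ∘L U.orthogonalProjectionOnto) x⟫ := by
  set P := U.subtypeL ∘L U.orthogonalProjectionOnto with hP
  have hmem : x - P x ∈ Uᗮ := Submodule.sub_starProjection_mem_orthogonal (K := U) x
  have hPx : P x ∈ U := (U.orthogonalProjectionOnto x).2
  have h2 : (⟪P x, x - P x⟫) = 0 := (Submodule.mem_orthogonal U (x - P x)).mp hmem (P x) hPx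
  have : (⟪P x, x⟫) = ⟪P x, P x⟫ + ⟪P x, x - P x⟫ := by
    rw [← inner_add_right]; congr 1; abel
  rw [this, h2, add_zero]

lemma aux_proj_pos (U : Submodule ℂ H) [CompleteSpace U] :
    (U.subtypeL ∘L U.orthogonalProjectionOnto).IsPositive := by
  refine ⟨ContinuousLinearMap.isSelfAdjoint_iff_isSymmetric.mp (isSelfAdjoint_starProjection U), fun x => ?_⟩
  have := aux_proj_inner U x
  simp only [reApplyInnerSelf_apply]
  rw [this]
  exact inner_self_nonneg

lemma aux_proj_compl_pos (U : Submodule ℂ H) [CompleteSpace U] :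
    ((1 : H →L[ℂ] H) - U.subtypeL ∘L U.orthogonalProjectionOnto).IsPositive := by
  set P := U.subtypeL ∘L U.orthogonalProjectionOnto with hP
  have hsa : IsSelfAdjoint ((1 : H →L[ℂ] H) - P) :=
    (IsSelfAdjoint.one _).sub (isSelfAdjoint_starProjection U)
  refine ⟨ContinuousLinearMap.isSelfAdjoint_iff_isSymmetric.mp hsa, fun x => ?_⟩
  have hmem : x - P x ∈ Uᗮ := Submodule.sub_starProjection_mem_orthogonal (K := U) x
  have hPx : P x ∈ U := (U.orthogonalProjectionOnto x).2
  have h2 : (⟪x - P x, P x⟫) = 0 := by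
    rw [← inner_conj_symm, (Submodule.mem_orthogonal U (x - P x)).mp hmem (P x) hPx]
    simp
  have happ : ((1 : H →L[ℂ] H) - P) x = x - P x := by simp
  have : (⟪x - P x, x⟫) = ⟪x - P x, x - P x⟫ + ⟪x - P x, P x⟫ := by
    rw [← inner_add_right]; congr 1; abel
  simp only [reApplyInnerSelf_apply, happ]
  rw [this, h2, add_zero]
  exact inner_self_nonneg

/-- `M⁻(W, ker T) = M⁻(W, S)` for the shorted operator `T` of `W` to `S`. -/
theorem stmt5 (W T : H →L[ℂ] H) (S : Submodule ℂ H) (hS : IsClosed (S : Set H))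
    (hW : W.IsPositive) (hT : IsShorted W S T) :
    MMinusSet W (LinearMap.ker (T : H →ₗ[ℂ] H)) = MMinusSet W S := by
  obtain ⟨⟨hTpos, hWTpos, hTrange⟩, hTmax⟩ := hT
  have hW0 : (0 : H →L[ℂ] H) ≤ W := (nonneg_iff_isPositive W).mpr hW
  have hWsa : adjoint W = W := hW.isSelfAdjoint.adjoint_eq
  set R := CFC.sqrt W with hRdef
  have hRR : R * R = W := CFC.sqrt_mul_sqrt_self W hW0
  have hRpos : R.IsPositive := (nonneg_iff_isPositive R).mp (CFC.sqrt_nonneg _)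
  have hRsa : adjoint R = R := hRpos.isSelfAdjoint.adjoint_eq
  have hWapp : ∀ x, W x = R (R x) := fun x => by rw [← hRR]; rfl
  set N := (Submodule.map (R : H →ₗ[ℂ] H) S).topologicalClosure with hNdef
  haveI : CompleteSpace N := (Submodule.isClosed_topologicalClosure _).completeSpace_coe
  set U := Nᗮ with hUdef
  haveI : CompleteSpace U := N.isClosed_orthogonal.completeSpace_coe
  set P := U.subtypeL ∘L U.orthogonalProjectionOnto with hPdef
  have hmemN : ∀ s ∈ S, R s ∈ N := fun s hs =>
    Submodule.le_topologicalClosure _ (Submodule.mem_map_of_mem hs)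
  set T' := R ∘L P ∘L R with hT'def
  -- T' ∈ MSet W S
  have hT'pos : T'.IsPositive := by
    have := (aux_proj_pos U).adjoint_conj R
    rwa [hRsa] at this
  have hWT'pos : (W - T').IsPositive := by
    have h := (aux_proj_compl_pos U).adjoint_conj R
    rw [hRsa] at h
    have heq : R ∘L ((1 : H →L[ℂ] H) - P) ∘L R = W - T' := by
      ext x
      simp only [comp_apply, sub_apply, ContinuousLinearMap.one_apply, map_sub, hT'def]
      rw [hWapp]
    rwa [heq] at h
  have hT'range : LinearMap.range (T' : H →ₗ[ℂ] H) ≤ Sᗮ := by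
    rintro y ⟨x, rfl⟩
    rw [Submodule.mem_orthogonal]
    intro u hu
    have h1 : T' x = (adjoint R) (P (R x)) := by rw [hRsa]; rfl
    rw [ContinuousLinearMap.coe_coe, h1, adjoint_inner_right]
    have hPz : P (R x) ∈ U := (U.orthogonalProjectionOnto (R x)).2
    exact (Submodule.mem_orthogonal N (P (R x))).mp hPz (R u) (hmemN u hu)
  have hT'le : (T - T').IsPositive := hTmax T' ⟨hT'pos, hWT'pos, hT'range⟩
  -- S ≤ ker T
  have hSker : ∀ s ∈ S, T s = 0 := by
    intro s hs
    apply aux_apply_eq_zero T hTpos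
    have h0 : (⟪s, T s⟫) = 0 := (Submodule.mem_orthogonal S (T s)).mp (hTrange ⟨s, rfl⟩) s hs
    have : (⟪T s, s⟫) = 0 := by rw [← inner_conj_symm, h0, map_zero]
    rw [this]; simp
  -- key : T n = 0 → R n ∈ N
  have key : ∀ n, T n = 0 → R n ∈ N := by
    intro n hn
    have ha : 0 ≤ RCLike.re (⟪T' n, n⟫) := hT'pos.re_inner_nonneg_left n
    have hb : 0 ≤ RCLike.re (⟪(T - T') n, n⟫) := hT'le.re_inner_nonneg_left n
    have hTT' : (⟪(T - T') n, n⟫) = -⟪T' n, n⟫ := by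
      rw [sub_apply, hn, zero_sub, inner_neg_left]
    rw [hTT'] at hb
    have h1 : RCLike.re (⟪T' n, n⟫) = 0 := by
      simp only [map_neg] at hb; linarith
    have h2 : (⟪T' n, n⟫) = ⟪P (R n), P (R n)⟫ := by
      have heq : T' n = (adjoint R) (P (R n)) := by rw [hRsa]; rfl
      rw [heq, adjoint_inner_left]
      exact aux_proj_inner U (R n)
    have h3 : P (R n) = 0 := by
      rw [← norm_eq_zero]
      refine pow_eq_zero_iff (n := 2) (by norm_num) |>.mp ?_
      rw [norm_sq_eq_re_inner (𝕜 := ℂ), ← h2, h1]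
    have h4 : R n ∈ Uᗮ := by
      rw [← Submodule.orthogonalProjectionOnto_eq_zero_iff]
      exact Submodule.coe_eq_zero.mp h3
    rwa [hUdef, Submodule.orthogonal_orthogonal] at h4
  -- main equality
  ext X
  simp only [MMinusSet, Set.mem_setOf_eq]
  constructor
  · rintro ⟨hm, h1, h2⟩
    have hle : S ≤ LinearMap.ker (T : H →ₗ[ℂ] H) := fun s hs => LinearMap.mem_ker.mpr (hSker s hs)
    exact ⟨hm, h1.trans (Submodule.orthogonal_le hle), h2.trans (Submodule.orthogonal_le hle)⟩
  · rintro ⟨hm, h1, h2⟩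
    obtain ⟨P', Q, hP', hQ, hXP, hXQ⟩ := hm
    -- X and adjoint X vanish on S
    have hXs : ∀ s ∈ S, X s = 0 := by
      intro s hs
      rw [← inner_self_eq_zero (𝕜 := ℂ), ← adjoint_inner_right]
      exact (Submodule.mem_orthogonal S _).mp (h2 ⟨X s, rfl⟩) s hs
    have hXas : ∀ s ∈ S, adjoint X s = 0 := by
      intro s hs
      rw [← inner_self_eq_zero (𝕜 := ℂ), adjoint_inner_left]
      exact (Submodule.mem_orthogonal S _).mp (h1 ⟨adjoint X s, rfl⟩) s hs
    -- X and adjoint X vanish on ker T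
    have hvan : ∀ (f : H →L[ℂ] H), (∀ s ∈ S, f (R s) = 0) → ∀ x ∈ N, f x = 0 := by
      intro f hf x hx
      have hle : N ≤ LinearMap.ker (f : H →ₗ[ℂ] H) := by
        apply Submodule.topologicalClosure_minimal
        · rintro y ⟨s, hs, rfl⟩
          exact LinearMap.mem_ker.mpr (hf s hs)
        · exact isClosed_ker f
      exact LinearMap.mem_ker.mp (hle hx)
    have hXker : ∀ n, T n = 0 → X n = 0 := by
      intro n hn
      have hXn : X n = (P' ∘L R) (R n) := by
        rw [hXP]; show P' (W n) = P' (R (R n)); rw [hWapp]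
      rw [hXn]
      apply hvan (P' ∘L R) _ (R n) (key n hn)
      intro s hs
      show P' (R (R s)) = 0
      rw [← hWapp]
      have : P' (W s) = X s := by rw [hXP]; rfl
      rw [this, hXs s hs]
    have hXaker : ∀ n, T n = 0 → adjoint X n = 0 := by
      intro n hn
      have hXn : adjoint X n = (Q ∘L R) (R n) := by
        rw [hXQ, hWsa]; show Q (W n) = Q (R (R n)); rw [hWapp]
      rw [hXn]
      apply hvan (Q ∘L R) _ (R n) (key n hn)
      intro s hs
      show Q (R (R s)) = 0
      rw [← hWapp]
      have : Q (W s) = adjoint X s := by rw [hXQ, hWsa]; rfl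
      rw [this, hXas s hs]
    refine ⟨⟨P', Q, hP', hQ, hXP, hXQ⟩, ?_, ?_⟩
    · rintro y ⟨x, rfl⟩
      rw [Submodule.mem_orthogonal]
      intro n hn
      rw [ContinuousLinearMap.coe_coe, ← adjoint_inner_left, hXaker n (LinearMap.mem_ker.mp hn), inner_zero_left]
    · rintro y ⟨x, rfl⟩
      rw [Submodule.mem_orthogonal]
      intro n hn
      rw [ContinuousLinearMap.coe_coe, adjoint_inner_right, hXker n (LinearMap.mem_ker.mp hn), inner_zero_left]
end
end

section
/- Let W ∈ L(H) be a positive injective operator and A, B ∈ L(H) operators with closed range such that ker B = ker(A*W), and let T be the shorted operator of W to range A. If the pair (W, ker T) is compatible, then T is the infimum, with respect to the minus order, of the set {(AXB − I)*W(AXB − I) : X ∈ L(H)}: T ⁻≤ (AXB − I)*W(AXB − I) for every X ∈ L(H), and every D ∈ L(H) satisfying D ⁻≤ (AXB − I)*W(AXB − I) for all X ∈ L(H) satisfies D ⁻≤ T. -/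
open ContinuousLinearMap
open scoped ComplexInnerProductSpace

noncomputable section

variable {H : Type*} [NormedAddCommGroup H] [InnerProductSpace ℂ H] [CompleteSpace H]

/-- Cauchy–Schwarz inequality for a positive operator. -/
lemma pos_cauchy_schwarz (R : H →L[ℂ] H) (hR : R.IsPositive) (m x : H) :
    ‖(⟪R m, x⟫ : ℂ)‖ ^ 2 ≤ RCLike.re (⟪R m, m⟫ : ℂ) * RCLike.re (⟪R x, x⟫ : ℂ) := by
  have hsym : ∀ u w : H, (⟪R u, w⟫ : ℂ) = ⟪u, R w⟫ := fun u w =>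
    hR.1 u w
  set a := RCLike.re (⟪R m, m⟫ : ℂ) with ha
  set d := RCLike.re (⟪R x, x⟫ : ℂ) with hd
  have ha0 : 0 ≤ a := hR.2 m
  have hd0 : 0 ≤ d := hR.2 x
  rcases eq_or_ne (⟪R m, x⟫ : ℂ) 0 with hb | hb
  · rw [hb]
    simpa using mul_nonneg ha0 hd0
  · set b : ℂ := (⟪R m, x⟫ : ℂ) with hbdef
    have hbpos : 0 < ‖b‖ := norm_pos_iff.mpr hb
    have hRxm : (⟪R x, m⟫ : ℂ) = (starRingEnd ℂ) b := by
      rw [hsym x m, ← inner_conj_symm]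
    have key : ∀ t : ℝ, 0 ≤ (d * ‖b‖ ^ 2) * (t * t) + (2 * ‖b‖ ^ 2) * t + a := by
      intro t
      have h0 := hR.2 (((t : ℂ) * (starRingEnd ℂ) b) • x + m)
      have hexp : (⟪R (((t : ℂ) * (starRingEnd ℂ) b) • x + m),
            ((t : ℂ) * (starRingEnd ℂ) b) • x + m⟫ : ℂ)
          = ((t : ℂ) * (t : ℂ)) * ((‖b‖ : ℂ) ^ 2) * ⟪R x, x⟫
            + (2 * (t : ℂ)) * ((‖b‖ : ℂ) ^ 2) + ⟪R m, m⟫ := by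
        have hmc : b * (starRingEnd ℂ) b = (‖b‖ : ℂ) ^ 2 := RCLike.mul_conj b
        simp only [map_add, map_smul, inner_add_left, inner_add_right,
          inner_smul_left, inner_smul_right, map_mul, Complex.conj_conj,
          Complex.conj_ofReal, hRxm, ← hbdef]
        rw [← hmc]
        ring
      have hre : RCLike.re (⟪R (((t : ℂ) * (starRingEnd ℂ) b) • x + m),
            ((t : ℂ) * (starRingEnd ℂ) b) • x + m⟫ : ℂ)
          = (d * ‖b‖ ^ 2) * (t * t) + (2 * ‖b‖ ^ 2) * t + a := by
        rw [hexp]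
        have e1 : ((t : ℂ) * (t : ℂ)) * ((‖b‖ : ℂ) ^ 2) = (((t * t * ‖b‖ ^ 2 : ℝ)) : ℂ) := by
          push_cast; ring
        have e2 : (2 * (t : ℂ)) * ((‖b‖ : ℂ) ^ 2) = (((2 * t * ‖b‖ ^ 2 : ℝ)) : ℂ) := by
          push_cast; ring
        rw [e1, e2, ha, hd]
        simp only [map_add, RCLike.re_to_complex, Complex.add_re, Complex.re_ofReal_mul,
          Complex.ofReal_re]
        ring
      rw [ContinuousLinearMap.reApplyInnerSelf_apply, hre] at h0
      exact h0
    have hdisc := discrim_le_zero key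
    rw [discrim] at hdisc
    nlinarith [hdisc, hbpos, mul_pos hbpos hbpos]

lemma pos_app_zero_of_re_inner_zero (R : H →L[ℂ] H) (hR : R.IsPositive) (m : H)
    (h : RCLike.re (⟪R m, m⟫ : ℂ) = 0) : R m = 0 := by
  have hcs := pos_cauchy_schwarz R hR m (R m)
  rw [h, zero_mul] at hcs
  have h2 : (⟪R m, R m⟫ : ℂ) = 0 := by
    have hn : ‖(⟪R m, R m⟫ : ℂ)‖ = 0 := by nlinarith [norm_nonneg (⟪R m, R m⟫ : ℂ)]
    exact norm_eq_zero.mp hn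
  exact inner_self_eq_zero.mp h2

lemma eq_of_isPositive_sub {X Y : H →L[ℂ] H} (h1 : (X - Y).IsPositive)
    (h2 : (Y - X).IsPositive) : X = Y := by
  rw [← sub_eq_zero]
  ext m
  have e1 : (Y - X) m = -((X - Y) m) := by simp
  have hle : RCLike.re (⟪(X - Y) m, m⟫ : ℂ) ≤ 0 := by
    have h2' := h2.2 m
    rw [ContinuousLinearMap.reApplyInnerSelf_apply] at h2'
    rw [e1, inner_neg_left, map_neg] at h2'
    linarith
  have hz := le_antisymm hle (h1.2 m)
  simpa using pos_app_zero_of_re_inner_zero _ h1 m hz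
set_option maxHeartbeats 4000000 in
/-- if `W` is injective and `(W, ker T)` is compatible, then `T` is the
minus-order infimum of `{(AXB - I)* W (AXB - I)}`. -/
theorem stmt9 (W A B T : H →L[ℂ] H) (hW : W.IsPositive) (hWinj : Function.Injective W)
    (hA : IsClosed (LinearMap.range (A : H →ₗ[ℂ] H) : Set H)) (hB : IsClosed (LinearMap.range (B : H →ₗ[ℂ] H) : Set H))
    (hker : LinearMap.ker (B : H →ₗ[ℂ] H) = LinearMap.ker ((adjoint A ∘L W : H →L[ℂ] H) : H →ₗ[ℂ] H))
    (hT : IsShorted W (LinearMap.range (A : H →ₗ[ℂ] H)) T)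
    (hcomp : Compatible W (LinearMap.ker (T : H →ₗ[ℂ] H))) :
    (∀ X : H →L[ℂ] H,
        MinusLE T (adjoint (A ∘L X ∘L B - 1) ∘L (W ∘L (A ∘L X ∘L B - 1)))) ∧
      ∀ D : H →L[ℂ] H,
        (∀ X : H →L[ℂ] H,
          MinusLE D (adjoint (A ∘L X ∘L B - 1) ∘L (W ∘L (A ∘L X ∘L B - 1)))) →
        MinusLE D T := by
  obtain ⟨Q₀, hQidem, hQrange, hQsa⟩ := hcomp
  have hTpos : T.IsPositive := hT.1.1
  have hWTpos : (W - T).IsPositive := hT.1.2.1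
  have hTrange : LinearMap.range (T : H →ₗ[ℂ] H) ≤ (LinearMap.range (A : H →ₗ[ℂ] H))ᗮ := hT.1.2.2
  have sW : star W = W := hW.isSelfAdjoint
  have sT : star T = T := hTpos.isSelfAdjoint
  set P₀ : H →L[ℂ] H := 1 - Q₀ with hP₀def
  have hPidem : IsIdempotentElem P₀ := hQidem.one_sub
  have hQQ : Q₀ * Q₀ = Q₀ := hQidem
  have hPP : P₀ * P₀ = P₀ := hPidem
  have hWQsa : star (W * Q₀) = W * Q₀ := hQsa
  have qw : star Q₀ * W = W * Q₀ := by rwa [star_mul, sW] at hWQsa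
  have pw : star P₀ * W = W * P₀ := by
    rw [hP₀def, star_sub, star_one, sub_mul, one_mul, qw, mul_sub, mul_one]
  have hTQ : ∀ x, T (Q₀ x) = 0 := fun x => by
    have hx : Q₀ x ∈ LinearMap.range (Q₀ : H →ₗ[ℂ] H) := ⟨x, rfl⟩
    rw [hQrange] at hx
    exact hx
  have tq : T * Q₀ = 0 := by
    ext x; simpa [ContinuousLinearMap.mul_apply] using hTQ x
  have tp : T * P₀ = T := by rw [hP₀def, mul_sub, mul_one, tq, sub_zero]
  have pt : star P₀ * T = T := by
    have h := congrArg star tp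
    rwa [star_mul, sT] at h
  have hTA : ∀ y, T (A y) = 0 := by
    intro y
    apply pos_app_zero_of_re_inner_zero T hTpos
    have h1 : T (A y) ∈ (LinearMap.range (A : H →ₗ[ℂ] H))ᗮ := hTrange ⟨A y, rfl⟩
    have h2 : (⟪A y, T (A y)⟫ : ℂ) = 0 := (Submodule.mem_orthogonal _ _).mp h1 (A y) ⟨y, rfl⟩
    rw [← inner_conj_symm (T (A y)) (A y), h2]
    simp
  have ta : T * A = 0 := by
    ext y; simpa [ContinuousLinearMap.mul_apply] using hTA y
  have at' : star A * T = 0 := by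
    have h := congrArg star ta
    rwa [star_mul, sT, star_zero] at h
  have qa : Q₀ * A = A := by
    ext y
    have hy : A y ∈ LinearMap.range (Q₀ : H →ₗ[ℂ] H) := by
      rw [hQrange]; exact LinearMap.mem_ker.mpr (hTA y)
    obtain ⟨u, hu⟩ := hy
    calc (Q₀ * A) y = Q₀ (A y) := rfl
    _ = Q₀ (Q₀ u) := by rw [← hu]; rfl
    _ = (Q₀ * Q₀) u := rfl
    _ = Q₀ u := by rw [hQQ]
    _ = A y := hu
  have pa : P₀ * A = 0 := by rw [hP₀def, sub_mul, one_mul, qa, sub_self]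
  have wp_eq : star P₀ * W * P₀ = W * P₀ := by rw [pw, mul_assoc, hPP]
  have wq_eq : star Q₀ * W * Q₀ = W * Q₀ := by rw [qw, mul_assoc, hQQ]
  have hWPpos : (W * P₀).IsPositive := by
    have h : (star P₀ * (W * P₀)).IsPositive := by
      rw [star_eq_adjoint]
      exact hW.adjoint_conj P₀
    rwa [← mul_assoc, wp_eq] at h
  have hWQpos : (W * Q₀).IsPositive := by
    have h : (star Q₀ * (W * Q₀)).IsPositive := by
      rw [star_eq_adjoint]
      exact hW.adjoint_conj Q₀
    rwa [← mul_assoc, wq_eq] at h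
  have swp : star (W * P₀) = W * P₀ := hWPpos.isSelfAdjoint
  have hWPmem : (W * P₀) ∈ MSet W (LinearMap.range (A : H →ₗ[ℂ] H)) := by
    refine ⟨hWPpos, ?_, ?_⟩
    · have e : W - W * P₀ = W * Q₀ := by
        rw [hP₀def, mul_sub, mul_one, sub_sub_cancel]
      rw [e]
      exact hWQpos
    · rintro v ⟨x, rfl⟩
      rw [Submodule.mem_orthogonal]
      rintro u ⟨z, rfl⟩
      have h1 : (W * P₀) (A z) = 0 := by
        have h2 : (W * P₀) * A = 0 := by rw [mul_assoc, pa, mul_zero]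
        calc (W * P₀) (A z) = (((W * P₀) * A)) z := rfl
        _ = (0 : H →L[ℂ] H) z := by rw [h2]
        _ = 0 := rfl
      have h3 := ContinuousLinearMap.adjoint_inner_left (W * P₀) x (A z)
      rw [← star_eq_adjoint, swp] at h3
      show (⟪A z, (W * P₀) x⟫ : ℂ) = 0
      rw [← h3, h1, inner_zero_left]
  have hmax : (T - W * P₀).IsPositive := hT.2 (W * P₀) hWPmem
  have hother : (W * P₀ - T).IsPositive := by
    have hTPT : star P₀ * T * P₀ = T := by rw [pt, tp]
    have h : (star P₀ * ((W - T) * P₀)).IsPositive := by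
      rw [star_eq_adjoint]
      have h' := hWTpos.adjoint_conj P₀
      rwa [← ContinuousLinearMap.comp_assoc] at h'
    have he : star P₀ * ((W - T) * P₀) = W * P₀ - T := by
      have hdist : star P₀ * ((W - T) * P₀) = star P₀ * W * P₀ - star P₀ * T * P₀ := by
        noncomm_ring
      rw [hdist, wp_eq, hTPT]
    rwa [he] at h
  have tWP : T = W * P₀ := eq_of_isPositive_sub hmax hother
  have aWP : star A * (W * P₀) = 0 := by rw [← tWP]; exact at'
  have bp : B * P₀ = 0 := by
    ext x
    have hx : P₀ x ∈ LinearMap.ker ((adjoint A ∘L W : H →L[ℂ] H) : H →ₗ[ℂ] H) := by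
      rw [LinearMap.mem_ker]
      calc (adjoint A ∘L W) (P₀ x) = (star A * (W * P₀)) x := rfl
      _ = (0 : H →L[ℂ] H) x := by rw [aWP]
      _ = 0 := rfl
    rw [← hker] at hx
    simpa [ContinuousLinearMap.mul_apply] using LinearMap.mem_ker.mp hx
  constructor
  · -- Part 1
    intro X
    have cp : (A ∘L X ∘L B - 1) * P₀ = -P₀ := by
      show (A * (X * B) - 1) * P₀ = -P₀
      rw [sub_mul, one_mul, mul_assoc, mul_assoc, bp, mul_zero, mul_zero, zero_sub]
    have pct : star P₀ * star (A ∘L X ∘L B - 1) = - star P₀ := by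
      have h := congrArg star cp
      rwa [star_mul, star_neg] at h
    have pm : star P₀ * (star (A ∘L X ∘L B - 1) * (W * (A ∘L X ∘L B - 1))) = T := by
      rw [← mul_assoc, pct, neg_mul, ← mul_assoc, pw, ← tWP]
      show -(T * (A * (X * B) - 1)) = T
      rw [mul_sub, mul_one, ← mul_assoc, ta, zero_mul, zero_sub, neg_neg]
    have msa : star (star (A ∘L X ∘L B - 1) * (W * (A ∘L X ∘L B - 1)))
        = star (A ∘L X ∘L B - 1) * (W * (A ∘L X ∘L B - 1)) := by
      rw [star_mul, star_mul, star_star, sW, mul_assoc]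
    have hPadj : IsIdempotentElem (adjoint P₀) := by
      show adjoint P₀ * adjoint P₀ = adjoint P₀
      rw [← star_eq_adjoint, ← star_mul, hPP]
    refine ⟨adjoint P₀, adjoint P₀, hPadj, hPadj, ?_, ?_⟩
    · show T = adjoint P₀ * (star (A ∘L X ∘L B - 1) * (W * (A ∘L X ∘L B - 1)))
      rw [← star_eq_adjoint]
      exact pm.symm
    · show star T = adjoint P₀ * star (star (A ∘L X ∘L B - 1) * (W * (A ∘L X ∘L B - 1)))
      rw [← star_eq_adjoint, msa, sT]
      exact pm.symm
  · -- Part 2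
    intro D hD
    have h0 := hD 0
    have e0 : (A ∘L (0 : H →L[ℂ] H) ∘L B - 1) = -1 := by
      rw [ContinuousLinearMap.zero_comp, ContinuousLinearMap.comp_zero, zero_sub]
    rw [e0] at h0
    have e1 : adjoint (-1 : H →L[ℂ] H) ∘L (W ∘L (-1 : H →L[ℂ] H)) = W := by
      rw [← star_eq_adjoint, star_neg, star_one]
      show (-1 : H →L[ℂ] H) * (W * (-1 : H →L[ℂ] H)) = W
      simp
    rw [e1] at h0
    obtain ⟨P1, Q1, hP1, hQ1, dP, dQ⟩ := h0
    have dP' : D = P1 * W := dP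
    have dQ' : star D = Q1 * W := by
      have hsW' : adjoint W = W := sW
      rw [hsW'] at dQ
      exact dQ
    have hDs : D = W * star Q1 := by
      have h := congrArg star dQ'
      rwa [star_star, star_mul, sW] at h
    have hsD : star D = W * star P1 := by
      have h := congrArg star dP'
      rwa [star_mul, sW] at h
    have hDS : ∀ y : H, D (A y) = 0 ∧ (star D) (A y) = 0 := by
      intro y
      by_cases hBs : B (A y) = 0
      · have hsy : A y ∈ LinearMap.ker ((adjoint A ∘L W : H →L[ℂ] H) : H →ₗ[ℂ] H) := by
          rw [← hker]; exact LinearMap.mem_ker.mpr hBs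
        have h1 : adjoint A (W (A y)) = 0 := LinearMap.mem_ker.mp hsy
        have hWAy : W (A y) = 0 := by
          apply pos_app_zero_of_re_inner_zero W hW
          have h2 : (⟪W (A y), A y⟫ : ℂ) = 0 := by
            rw [← ContinuousLinearMap.adjoint_inner_left A y (W (A y)), h1, inner_zero_left]
          rw [h2]
          simp
        have hAy : A y = 0 := hWinj (by rw [hWAy, map_zero])
        rw [hAy]
        simp
      · set Xs : H →L[ℂ] H := ((‖B (A y)‖ : ℂ) ^ 2)⁻¹ • ((innerSL ℂ (B (A y))).smulRight y)
          with hXs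
        have hnz : ((‖B (A y)‖ : ℂ) ^ 2) ≠ 0 := by
          have hn : (‖B (A y)‖ : ℂ) ≠ 0 :=
            Complex.ofReal_ne_zero.mpr (norm_ne_zero_iff.mpr hBs)
          exact pow_ne_zero 2 hn
        have hXsBs : Xs (B (A y)) = y := by
          rw [hXs]
          simp only [ContinuousLinearMap.smul_apply, ContinuousLinearMap.smulRight_apply,
            innerSL_apply_apply]
          have hself : (⟪B (A y), B (A y)⟫ : ℂ) = (‖B (A y)‖ : ℂ) ^ 2 := by
            rw [inner_self_eq_norm_sq_to_K]
            norm_cast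
          rw [hself, smul_smul, inv_mul_cancel₀ hnz, one_smul]
        have hCs : (A ∘L Xs ∘L B - 1) (A y) = 0 := by
          have e : (A ∘L Xs ∘L B - 1) (A y) = A (Xs (B (A y))) - A y := by
            simp [ContinuousLinearMap.sub_apply, ContinuousLinearMap.comp_apply]
          rw [e, hXsBs, sub_self]
        obtain ⟨P2, Q2, _, _, dP2, dQ2⟩ := hD Xs
        have msa2 : adjoint (adjoint (A ∘L Xs ∘L B - 1) ∘L (W ∘L (A ∘L Xs ∘L B - 1)))
            = adjoint (A ∘L Xs ∘L B - 1) ∘L (W ∘L (A ∘L Xs ∘L B - 1)) := by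
          show star (star (A ∘L Xs ∘L B - 1) * (W * (A ∘L Xs ∘L B - 1)))
              = star (A ∘L Xs ∘L B - 1) * (W * (A ∘L Xs ∘L B - 1))
          rw [star_mul, star_mul, star_star, sW, mul_assoc]
        constructor
        · rw [dP2]
          simp only [ContinuousLinearMap.comp_apply]
          rw [hCs]
          simp only [map_zero]
        · have e10 : (star D) (A y) = (adjoint D) (A y) := rfl
          rw [e10, dQ2, msa2]
          simp only [ContinuousLinearMap.comp_apply]
          rw [hCs]
          simp only [map_zero]
    have da : D * A = 0 := by
      ext y; simpa [ContinuousLinearMap.mul_apply] using (hDS y).1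
    have sda : star D * A = 0 := by
      ext y; simpa [ContinuousLinearMap.mul_apply] using (hDS y).2
    have key : ∀ h : H, adjoint A (W h) = 0 → Q₀ h = 0 := by
      intro h hh
      have hTm : T (Q₀ h) = 0 := hTQ h
      have hAWm : adjoint A (W (Q₀ h)) = 0 := by
        have e2 : W (Q₀ h) = (star Q₀) (W h) := by
          calc W (Q₀ h) = (W * Q₀) h := rfl
          _ = (star Q₀ * W) h := by rw [qw]
          _ = (star Q₀) (W h) := rfl
        have e3 : star A * star Q₀ = star A := by rw [← star_mul, qa]
        rw [e2]
        calc adjoint A ((star Q₀) (W h)) = (star A * star Q₀) (W h) := rfl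
        _ = (star A) (W h) := by rw [e3]
        _ = adjoint A (W h) := rfl
        _ = 0 := hh
      have hWm : W (Q₀ h) = 0 := by
        by_cases hc0 : RCLike.re (⟪W (Q₀ h), Q₀ h⟫ : ℂ) = 0
        · exact pos_app_zero_of_re_inner_zero W hW (Q₀ h) hc0
        · exfalso
          set c := RCLike.re (⟪W (Q₀ h), Q₀ h⟫ : ℂ) with hc
          have hcpos : 0 < c := lt_of_le_of_ne (hW.2 (Q₀ h)) (Ne.symm hc0)
          set v := W (Q₀ h) with hv
          set F : H →L[ℂ] H := ((c : ℂ))⁻¹ • ((innerSL ℂ v).smulRight v) with hF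
          have hFapp : ∀ x, F x = (((c : ℂ))⁻¹ * ⟪v, x⟫) • v := by
            intro x
            rw [hF]
            simp only [ContinuousLinearMap.smul_apply, ContinuousLinearMap.smulRight_apply,
              innerSL_apply_apply, smul_smul]
          have hFinner : ∀ x z : H, (⟪F x, z⟫ : ℂ) = ((c : ℂ))⁻¹ * ⟪x, v⟫ * ⟪v, z⟫ := by
            intro x z
            rw [hFapp, inner_smul_left, map_mul, map_inv₀, Complex.conj_ofReal,
              inner_conj_symm]
          have hFsym : ∀ x z : H, (⟪F x, z⟫ : ℂ) = ⟪x, F z⟫ := by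
            intro x z
            rw [hFinner, hFapp, inner_smul_right]
            ring
          have hFsa : IsSelfAdjoint F := by
            rw [ContinuousLinearMap.isSelfAdjoint_iff_isSymmetric]
            intro x z
            exact hFsym x z
          have hFre : ∀ x, RCLike.re (⟪F x, x⟫ : ℂ) = c⁻¹ * ‖(⟪v, x⟫ : ℂ)‖ ^ 2 := by
            intro x
            rw [hFinner x x, ← inner_conj_symm x v]
            have hmc : (starRingEnd ℂ) ((⟪v, x⟫ : ℂ)) * (⟪v, x⟫ : ℂ)
                = ((‖(⟪v, x⟫ : ℂ)‖ : ℂ)) ^ 2 := RCLike.conj_mul _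
            have e5 : ((c : ℂ))⁻¹ * ((starRingEnd ℂ) ((⟪v, x⟫ : ℂ))) * (⟪v, x⟫ : ℂ)
                = (((c⁻¹ * ‖(⟪v, x⟫ : ℂ)‖ ^ 2 : ℝ)) : ℂ) := by
              rw [mul_assoc, hmc]
              push_cast
              ring
            rw [e5]
            exact RCLike.ofReal_re _
          have hTFpos : (T + F).IsPositive := by
            refine isPositive_def'.mpr ⟨hTpos.isSelfAdjoint.add hFsa, fun x => ?_⟩
            rw [ContinuousLinearMap.reApplyInnerSelf_apply, ContinuousLinearMap.add_apply,
              inner_add_left, map_add]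
            have h6 := hTpos.2 x
            rw [ContinuousLinearMap.reApplyInnerSelf_apply] at h6
            have h7 : 0 ≤ RCLike.re (⟪F x, x⟫ : ℂ) := by
              rw [hFre x]
              positivity
            linarith
          have hWTFpos : (W - (T + F)).IsPositive := by
            refine isPositive_def'.mpr ⟨hW.isSelfAdjoint.sub (hTpos.isSelfAdjoint.add hFsa), fun x => ?_⟩
            rw [ContinuousLinearMap.reApplyInnerSelf_apply]
            have e6 : (W - (T + F)) x = (W - T) x - F x := by
              simp only [ContinuousLinearMap.sub_apply, ContinuousLinearMap.add_apply]
              abel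
            rw [e6, inner_sub_left, map_sub]
            have hRm : (W - T) (Q₀ h) = v := by
              simp only [ContinuousLinearMap.sub_apply, hTm, sub_zero, hv]
            have hcs := pos_cauchy_schwarz (W - T) hWTpos (Q₀ h) x
            rw [hRm] at hcs
            have hrc : RCLike.re (⟪v, Q₀ h⟫ : ℂ) = c := by rw [hc]
            rw [hrc] at hcs
            rw [hFre x]
            nlinarith [hcs, hcpos, inv_pos.mpr hcpos, mul_inv_cancel₀ (ne_of_gt hcpos)]
          have hvS : v ∈ (LinearMap.range (A : H →ₗ[ℂ] H))ᗮ := by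
            rw [Submodule.mem_orthogonal]
            rintro u ⟨z, rfl⟩
            show (⟪A z, v⟫ : ℂ) = 0
            rw [← inner_conj_symm (A z) v, ← ContinuousLinearMap.adjoint_inner_left A z v,
              hAWm]
            simp
          have hTFmem : (T + F) ∈ MSet W (LinearMap.range (A : H →ₗ[ℂ] H)) := by
            refine ⟨hTFpos, hWTFpos, ?_⟩
            rintro u ⟨x, rfl⟩
            have e : (T + F) x = T x + F x := rfl
            show (T + F) x ∈ _
            rw [e]
            refine Submodule.add_mem _ (hTrange ⟨x, rfl⟩) ?_
            rw [hFapp x]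
            exact Submodule.smul_mem _ _ hvS
          have hneg := hT.2 (T + F) hTFmem
          have h8 := hneg.2 (Q₀ h)
          rw [ContinuousLinearMap.reApplyInnerSelf_apply] at h8
          have e7 : (T - (T + F)) (Q₀ h) = -(F (Q₀ h)) := by
            simp only [ContinuousLinearMap.sub_apply, ContinuousLinearMap.add_apply]
            abel
          rw [e7, inner_neg_left, map_neg] at h8
          have h9 := hFre (Q₀ h)
          have h10 : c ≤ ‖(⟪v, Q₀ h⟫ : ℂ)‖ := by
            have h11 := RCLike.abs_re_le_norm (⟪v, Q₀ h⟫ : ℂ)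
            have h12 : RCLike.re (⟪v, Q₀ h⟫ : ℂ) = c := by rw [hc]
            rw [h12] at h11
            calc c ≤ |c| := le_abs_self c
            _ ≤ ‖(⟪v, Q₀ h⟫ : ℂ)‖ := h11
          nlinarith [h8, h9, h10, hcpos, inv_pos.mpr hcpos,
            mul_inv_cancel₀ (ne_of_gt hcpos), sq_nonneg (‖(⟪v, Q₀ h⟫ : ℂ)‖ - c)]
      exact hWinj (by rw [hWm, map_zero])
    have dq : D * Q₀ = 0 := by
      ext h
      have hz : ∀ y : H, (⟪D (Q₀ h), y⟫ : ℂ) = 0 := by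
        intro y
        have e2 : (adjoint D) y = W ((star P1) y) := by
          calc (adjoint D) y = (star D) y := rfl
          _ = (W * star P1) y := by rw [hsD]
          _ = W ((star P1) y) := rfl
        have e3 : adjoint A (W ((star P1) y)) = 0 := by
          have h5 : star A * star D = 0 := by
            have hh := congrArg star da
            rwa [star_mul, star_zero] at hh
          have h6 : star A * (W * star P1) = 0 := by rw [← hsD]; exact h5
          calc adjoint A (W ((star P1) y)) = (star A * (W * star P1)) y := rfl
          _ = (0 : H →L[ℂ] H) y := by rw [h6]
          _ = 0 := rfl
        have hQ0 : Q₀ ((star P1) y) = 0 := key _ e3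
        calc (⟪D (Q₀ h), y⟫ : ℂ) = ⟪Q₀ h, adjoint D y⟫ :=
          (ContinuousLinearMap.adjoint_inner_right D (Q₀ h) y).symm
        _ = ⟪Q₀ h, W ((star P1) y)⟫ := by rw [e2]
        _ = ⟪h, adjoint Q₀ (W ((star P1) y))⟫ :=
          (ContinuousLinearMap.adjoint_inner_right Q₀ h _).symm
        _ = 0 := by
            have e4 : adjoint Q₀ (W ((star P1) y)) = 0 := by
              calc adjoint Q₀ (W ((star P1) y)) = (star Q₀ * W) ((star P1) y) := rfl
              _ = (W * Q₀) ((star P1) y) := by rw [qw]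
              _ = W (Q₀ ((star P1) y)) := rfl
              _ = 0 := by rw [hQ0, map_zero]
            rw [e4, inner_zero_right]
      have hDQh : D (Q₀ h) = 0 := inner_self_eq_zero.mp (hz (D (Q₀ h)))
      simpa [ContinuousLinearMap.mul_apply] using hDQh
    have dsq : star D * Q₀ = 0 := by
      ext h
      have hz : ∀ y : H, (⟪(star D) (Q₀ h), y⟫ : ℂ) = 0 := by
        intro y
        have e2 : D y = W ((star Q1) y) := by
          calc D y = (W * star Q1) y := by rw [← hDs]
          _ = W ((star Q1) y) := rfl
        have e3 : adjoint A (W ((star Q1) y)) = 0 := by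
          have h5 : star A * D = 0 := by
            have hh := congrArg star sda
            rwa [star_mul, star_star, star_zero] at hh
          have h6 : star A * (W * star Q1) = 0 := by rw [← hDs]; exact h5
          calc adjoint A (W ((star Q1) y)) = (star A * (W * star Q1)) y := rfl
          _ = (0 : H →L[ℂ] H) y := by rw [h6]
          _ = 0 := rfl
        have hQ0 : Q₀ ((star Q1) y) = 0 := key _ e3
        calc (⟪(star D) (Q₀ h), y⟫ : ℂ) = ⟪(adjoint D) (Q₀ h), y⟫ := rfl
        _ = ⟪Q₀ h, adjoint (adjoint D) y⟫ :=
          (ContinuousLinearMap.adjoint_inner_right (adjoint D) (Q₀ h) y).symm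
        _ = ⟪Q₀ h, D y⟫ := by rw [ContinuousLinearMap.adjoint_adjoint]
        _ = ⟪Q₀ h, W ((star Q1) y)⟫ := by rw [e2]
        _ = ⟪h, adjoint Q₀ (W ((star Q1) y))⟫ :=
          (ContinuousLinearMap.adjoint_inner_right Q₀ h _).symm
        _ = 0 := by
            have e4 : adjoint Q₀ (W ((star Q1) y)) = 0 := by
              calc adjoint Q₀ (W ((star Q1) y)) = (star Q₀ * W) ((star Q1) y) := rfl
              _ = (W * Q₀) ((star Q1) y) := by rw [qw]
              _ = W (Q₀ ((star Q1) y)) := rfl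
              _ = 0 := by rw [hQ0, map_zero]
            rw [e4, inner_zero_right]
      have hDQh : (star D) (Q₀ h) = 0 := inner_self_eq_zero.mp (hz ((star D) (Q₀ h)))
      simpa [ContinuousLinearMap.mul_apply] using hDQh
    have dfin : D = P1 * T := by
      have h1 : D * P₀ = D := by rw [hP₀def, mul_sub, mul_one, dq, sub_zero]
      calc D = D * P₀ := h1.symm
      _ = P1 * W * P₀ := by rw [dP']
      _ = P1 * (W * P₀) := mul_assoc _ _ _
      _ = P1 * T := by rw [← tWP]
    have sdfin : star D = Q1 * T := by
      have h1 : star D * P₀ = star D := by rw [hP₀def, mul_sub, mul_one, dsq, sub_zero]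
      calc star D = star D * P₀ := h1.symm
      _ = Q1 * W * P₀ := by rw [dQ']
      _ = Q1 * (W * P₀) := mul_assoc _ _ _
      _ = Q1 * T := by rw [← tWP]
    refine ⟨P1, Q1, hP1, hQ1, dfin, ?_⟩
    show adjoint D = Q1 * adjoint T
    have hsT' : adjoint T = T := sT
    rw [hsT']
    exact sdfin
end
end

section
/- Let W ∈ L(H) be a positive operator, A ∈ L(H) an operator with closed range and B ∈ L(H), such that ker W ∩ range A = {0}, ker W ∩ closure(range A*) = {0}, and the pairs (W, range A) and (W, closure(range A*)) are compatible. Then A *_W≤ B if and only if AWA* = BWA* and A*WA = A*WB. -/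
open ContinuousLinearMap
open scoped ComplexInnerProductSpace

noncomputable section

variable {H : Type*} [NormedAddCommGroup H] [InnerProductSpace ℂ H] [CompleteSpace H]

/-- A positive operator with `⟪W a, a⟫ = 0` kills `a` in the sense `W a = 0`. -/
lemma pos_apply_eq_zero_aux {W : H →L[ℂ] H} (hW : W.IsPositive) {a : H}
    (h : ⟪W a, a⟫ = 0) : W a = 0 := by
  have hadj : adjoint W = W := hW.isSelfAdjoint.adjoint_eq
  have key_re : ∀ y : H, (⟪W a, y⟫).re = 0 := by
    intro y
    set b := (⟪W a, y⟫).re with hb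
    set c := (⟪W y, y⟫).re with hc
    have hc0 : 0 ≤ c := (Complex.nonneg_iff.1 (hW.inner_nonneg_left y)).1
    have hq : ∀ t : ℝ, 0 ≤ c * (t * t) + (2 * b) * t + 0 := by
      intro t
      have h0 : 0 ≤ (⟪W (a + (t : ℂ) • y), a + (t : ℂ) • y⟫).re :=
        (Complex.nonneg_iff.1 (hW.inner_nonneg_left (a + (t : ℂ) • y))).1
      have hWya : ⟪W y, a⟫ = (starRingEnd ℂ) ⟪W a, y⟫ := by
        rw [← inner_conj_symm]
        congr 1
        nth_rewrite 1 [← hadj]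
        rw [adjoint_inner_right]
      have hexp : ⟪W (a + (t : ℂ) • y), a + (t : ℂ) • y⟫
          = ⟪W a, a⟫ + (t : ℂ) * ⟪W a, y⟫ + (t : ℂ) * (starRingEnd ℂ) ⟪W a, y⟫
            + (t : ℂ) * ((t : ℂ) * ⟪W y, y⟫) := by
        rw [map_add, map_smul]
        rw [inner_add_left, inner_add_right, inner_add_right, inner_smul_left, inner_smul_right,
          inner_smul_right, inner_smul_left]
        rw [Complex.conj_ofReal, hWya]
        ring
      rw [hexp, h] at h0
      simp only [Complex.add_re, Complex.zero_re, Complex.mul_re, Complex.ofReal_re,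
        Complex.ofReal_im, Complex.conj_re, Complex.conj_im] at h0
      rw [← hb, ← hc] at h0
      nlinarith [h0]
    have hd := discrim_le_zero hq
    rw [discrim] at hd
    nlinarith [hd, sq_nonneg b]
  have key : ∀ y : H, ⟪W a, y⟫ = 0 := by
    intro y
    have h1 := key_re y
    have h2 := key_re ((Complex.I : ℂ) • y)
    rw [inner_smul_right] at h2
    simp only [Complex.mul_re, Complex.I_re, Complex.I_im] at h2
    apply Complex.ext
    · exact h1
    · simpa using h2
  have := key (W a)
  rwa [inner_self_eq_zero] at this

/-- The key cancellation lemma: if `Q` is an idempotent with range `N`, `WQ` selfadjoint,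
`ker W ⊓ N = ⊥`, and all `W (D x)` are orthogonal to `N`, then `Q ∘L D = 0`. -/
lemma qkill_aux {W Q D : H →L[ℂ] H} (hW : W.IsPositive) (hQ : IsIdempotentElem Q)
    (hsa : IsSelfAdjoint (W ∘L Q)) {N : Submodule ℂ H} (hrQ : LinearMap.range (Q : H →ₗ[ℂ] H) = N)
    (hker : LinearMap.ker (W : H →ₗ[ℂ] H) ⊓ N = ⊥)
    (horth : ∀ x : H, ∀ n ∈ N, ⟪W (D x), n⟫ = 0) : Q ∘L D = 0 := by
  have hadjW : adjoint W = W := hW.isSelfAdjoint.adjoint_eq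
  ext x
  set a := Q (D x) with ha
  have haN : a ∈ N := hrQ ▸ LinearMap.mem_range_self (Q : H →ₗ[ℂ] H) (D x)
  have hQa : Q a = a := by
    rw [ha, ← ContinuousLinearMap.comp_apply, ← ContinuousLinearMap.mul_def, hQ]
  have hWa : W a = adjoint Q (W (D x)) := by
    have : W a = (W ∘L Q) (D x) := rfl
    rw [this, ← hsa.adjoint_eq, adjoint_comp, hadjW]
    rfl
  have hinner : ⟪W a, a⟫ = 0 := by
    rw [hWa, adjoint_inner_left, hQa]
    exact horth x a haN
  have hWa0 : W a = 0 := pos_apply_eq_zero_aux hW hinner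
  have : a ∈ LinearMap.ker (W : H →ₗ[ℂ] H) ⊓ N := ⟨hWa0, haN⟩
  rw [hker] at this
  simpa using this

set_option maxHeartbeats 1600000

/-- under the compatibility and trivial-intersection hypotheses,
`A *_W≤ B` iff `AWA* = BWA*` and `A*WA = A*WB`. -/
theorem stmt15 (W A B : H →L[ℂ] H) (hW : W.IsPositive)
    (hA : IsClosed (LinearMap.range (A : H →ₗ[ℂ] H) : Set H))
    (h1 : LinearMap.ker (W : H →ₗ[ℂ] H) ⊓ LinearMap.range (A : H →ₗ[ℂ] H) = ⊥)
    (h2 : LinearMap.ker (W : H →ₗ[ℂ] H) ⊓ (LinearMap.range ((adjoint A : H →L[ℂ] H) : H →ₗ[ℂ] H)).topologicalClosure = ⊥)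
    (h3 : Compatible W (LinearMap.range (A : H →ₗ[ℂ] H)))
    (h4 : Compatible W (LinearMap.range ((adjoint A : H →L[ℂ] H) : H →ₗ[ℂ] H)).topologicalClosure) :
    StarW W A B ↔
      A ∘L (W ∘L adjoint A) = B ∘L (W ∘L adjoint A) ∧
        adjoint A ∘L (W ∘L A) = adjoint A ∘L (W ∘L B) := by
  have hadjW : ContinuousLinearMap.adjoint W = W := hW.isSelfAdjoint.adjoint_eq
  constructor
  · rintro ⟨⟨-, -, hL3⟩, ⟨-, -, hR3⟩⟩
    constructor
    · -- AWA* = BWA* from hR3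
      have e : A ∘L (W ∘L adjoint B) = A ∘L (W ∘L adjoint A) := by
        ext x
        have hx := hR3 (LinearMap.mem_range_self _ x)
        rw [LinearMap.mem_ker] at hx
        simp only [ContinuousLinearMap.coe_coe, ContinuousLinearMap.comp_apply, ContinuousLinearMap.sub_apply,
          map_sub] at hx ⊢
        rw [sub_eq_zero] at hx
        exact hx
      have e2 := congrArg ContinuousLinearMap.adjoint e
      simp only [adjoint_comp, adjoint_adjoint, hadjW] at e2
      ext x
      have h2x := congrArg (fun T : H →L[ℂ] H => T x) e2
      simp only [ContinuousLinearMap.comp_apply] at h2x ⊢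
      exact h2x.symm
    · ext x
      have hx := hL3 (LinearMap.mem_range_self _ x)
      rw [LinearMap.mem_ker] at hx
      simp only [ContinuousLinearMap.coe_coe, ContinuousLinearMap.comp_apply, ContinuousLinearMap.sub_apply,
        map_sub] at hx ⊢
      rw [sub_eq_zero] at hx
      exact hx.symm
  · rintro ⟨hE1, hE2⟩
    obtain ⟨Q, hQi, hQr, hQsa⟩ := h3
    obtain ⟨Q', hQ'i, hQ'r, hQ'sa⟩ := h4
    have hL3 : ∀ x, adjoint A (W ((B - A) x)) = 0 := by
      intro x
      have hx := congrArg (fun T : H →L[ℂ] H => T x) hE2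
      simp only [ContinuousLinearMap.comp_apply] at hx
      simp only [ContinuousLinearMap.sub_apply, map_sub]
      rw [sub_eq_zero]
      exact hx.symm
    have hE1' : A ∘L (W ∘L adjoint A) = A ∘L (W ∘L adjoint B) := by
      have e2 := congrArg ContinuousLinearMap.adjoint hE1
      simp only [adjoint_comp, adjoint_adjoint, hadjW] at e2
      ext x
      have h2x := congrArg (fun T : H →L[ℂ] H => T x) e2
      simp only [ContinuousLinearMap.comp_apply] at h2x ⊢
      exact h2x
    have hR3 : ∀ x, A (W ((adjoint B - adjoint A) x)) = 0 := by
      intro x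
      have hx := congrArg (fun T : H →L[ℂ] H => T x) hE1'
      simp only [ContinuousLinearMap.comp_apply] at hx
      simp only [ContinuousLinearMap.sub_apply, map_sub]
      rw [sub_eq_zero]
      exact hx.symm
    have hQBA : Q ∘L (B - A) = 0 := by
      apply qkill_aux hW hQi hQsa hQr h1
      rintro x n ⟨y, rfl⟩
      rw [ContinuousLinearMap.coe_coe, ← adjoint_inner_left, hL3 x, inner_zero_left]
    have hQ'BA : Q' ∘L (adjoint B - adjoint A) = 0 := by
      apply qkill_aux hW hQ'i hQ'sa hQ'r h2
      intro x n hn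
      have hclosed : IsClosed {v : H | ⟪W ((adjoint B - adjoint A) x), v⟫ = (0 : ℂ)} :=
        isClosed_eq (Continuous.inner continuous_const continuous_id) continuous_const
      have hsub : (LinearMap.range ((adjoint A : H →L[ℂ] H) : H →ₗ[ℂ] H) : Set H) ⊆
          {v : H | ⟪W ((adjoint B - adjoint A) x), v⟫ = (0 : ℂ)} := by
        rintro v ⟨y, rfl⟩
        show ⟪W ((adjoint B - adjoint A) x), adjoint A y⟫ = 0
        rw [adjoint_inner_right, hR3 x, inner_zero_left]
      have hn' : n ∈ closure (LinearMap.range ((adjoint A : H →L[ℂ] H) : H →ₗ[ℂ] H) : Set H) := by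
        rw [← Submodule.topologicalClosure_coe]
        exact hn
      exact closure_minimal hsub hclosed hn'
    have hQfix : ∀ v ∈ LinearMap.range (A : H →ₗ[ℂ] H), Q v = v := by
      intro v hv
      rw [← hQr] at hv
      obtain ⟨u, rfl⟩ := hv
      rw [ContinuousLinearMap.coe_coe, ← ContinuousLinearMap.mul_apply, hQi]
    have hQ'fix : ∀ v ∈ (LinearMap.range ((adjoint A : H →L[ℂ] H) : H →ₗ[ℂ] H)).topologicalClosure, Q' v = v := by
      intro v hv
      rw [← hQ'r] at hv
      obtain ⟨u, rfl⟩ := hv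
      rw [ContinuousLinearMap.coe_coe, ← ContinuousLinearMap.mul_apply, hQ'i]
    have hQA : Q ∘L A = A := by
      ext x; exact hQfix (A x) (LinearMap.mem_range_self _ x)
    have hQ'A : Q' ∘L adjoint A = adjoint A := by
      ext x
      exact hQ'fix (adjoint A x)
        (Submodule.le_topologicalClosure _ (LinearMap.mem_range_self _ x))
    have hQB : Q ∘L B = A := by
      have hs : Q ∘L B - Q ∘L A = 0 := by
        rw [← ContinuousLinearMap.comp_sub]; exact hQBA
      rw [sub_eq_zero] at hs
      rw [hs, hQA]
    have hQ'B : Q' ∘L adjoint B = adjoint A := by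
      have hs : Q' ∘L adjoint B - Q' ∘L adjoint A = 0 := by
        rw [← ContinuousLinearMap.comp_sub]; exact hQ'BA
      rw [sub_eq_zero] at hs
      rw [hs, hQ'A]
    have hAB : A = B ∘L adjoint Q' := by
      have e := congrArg ContinuousLinearMap.adjoint hQ'B
      rw [adjoint_comp, adjoint_adjoint, adjoint_adjoint] at e
      exact e.symm
    have hA'B : adjoint A = adjoint B ∘L adjoint Q := by
      have e := congrArg ContinuousLinearMap.adjoint hQB
      rw [adjoint_comp] at e
      exact e.symm
    have hAx : ∀ x, A x = B (adjoint Q' x) := by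
      intro x
      rw [hAB]; rfl
    have hA'x : ∀ x, adjoint A x = adjoint B (adjoint Q x) := by
      intro x
      rw [hA'B]; rfl
    refine ⟨⟨?_, ?_, ?_⟩, ?_, ?_, ?_⟩
    · apply le_antisymm
      · rintro v ⟨x, rfl⟩
        exact Submodule.mem_sup.2 ⟨A x, LinearMap.mem_range_self _ x,
          (B - A) x, LinearMap.mem_range_self _ x, by simp⟩
      · rw [sup_le_iff]
        constructor
        · rintro v ⟨x, rfl⟩
          exact ⟨adjoint Q' x, (hAx x).symm⟩
        · rintro v ⟨x, rfl⟩
          refine ⟨x - adjoint Q' x, ?_⟩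
          rw [map_sub, ContinuousLinearMap.coe_coe, ← hAx]
          simp
    · rw [eq_bot_iff]
      rintro v ⟨hv1, hv2⟩
      obtain ⟨x, rfl⟩ := hv2
      have h0 : Q ((B - A) x) = 0 := by
        rw [← ContinuousLinearMap.comp_apply, hQBA, ContinuousLinearMap.zero_apply]
      rw [Submodule.mem_bot]; show (B - A) x = 0; rw [← hQfix ((B - A) x) hv1, h0]
    · rintro v ⟨x, rfl⟩
      rw [LinearMap.mem_ker]
      simpa using hL3 x
    · apply le_antisymm
      · rintro v ⟨x, rfl⟩
        exact Submodule.mem_sup.2 ⟨adjoint A x, LinearMap.mem_range_self _ x,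
          (adjoint B - adjoint A) x, LinearMap.mem_range_self _ x, by simp⟩
      · rw [sup_le_iff]
        constructor
        · rintro v ⟨x, rfl⟩
          exact ⟨adjoint Q x, (hA'x x).symm⟩
        · rintro v ⟨x, rfl⟩
          refine ⟨x - adjoint Q x, ?_⟩
          rw [map_sub, ContinuousLinearMap.coe_coe, ← hA'x]
          simp
    · rw [eq_bot_iff]
      rintro v ⟨hv1, hv2⟩
      obtain ⟨x, rfl⟩ := hv2
      have h0 : Q' ((adjoint B - adjoint A) x) = 0 := by
        rw [← ContinuousLinearMap.comp_apply, hQ'BA, ContinuousLinearMap.zero_apply]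
      have hv1' : (adjoint B - adjoint A) x ∈
          (LinearMap.range ((adjoint A : H →L[ℂ] H) : H →ₗ[ℂ] H)).topologicalClosure :=
        Submodule.le_topologicalClosure _ hv1
      rw [Submodule.mem_bot]; show (adjoint B - adjoint A) x = 0; rw [← hQ'fix _ hv1', h0]
    · rintro v ⟨x, rfl⟩
      rw [LinearMap.mem_ker]
      simpa using hR3 x
end
end
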